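/- Let (T, ≤) be a partial order in which every element has two upper bounds that are incomparable with each other. Let (b_i)_{i ∈ I} be a family of pairwise disjoint subsets of T such that for each i the downward closure {x ∈ T : ∃ y ∈ b_i, x ≤ y} is a chain. Let h : T → ℕ satisfy: whenever ρ < ν and h(ρ) = h(ν), there exists i ∈ I with ρ ∈ b_i and ν ∈ b_i. Then for every n ∈ ℕ the set ℐ_n := {ρ ∈ T : for all ν ≥ ρ, h(ν) ≠ n} is upward closed and dense in T (every element of T has an upper bound in ℐ_n), and the intersection of the sets ℐ_n over all n ∈ ℕ is empty. -/
import Mathlib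


/-- (*)₂ and part of (*)₃ in the proof of Claim 3.7: if every element of the
partial order `T` has two incomparable upper bounds, `(b i)` is a family of
pairwise disjoint subsets of `T` whose downward closures are chains, and
`h : T → ℕ` is one-to-one on `<`-related pairs except within some `b i`, then
each `ℐ_n = {ρ | ∀ ν ≥ ρ, h ν ≠ n}` is upward closed and dense, yet
`⋂ n, ℐ_n = ∅`. -/
theorem stmt3 {T : Type*} [PartialOrder T] {I : Type*}
    (hsplit : ∀ x : T, ∃ y z, x ≤ y ∧ x ≤ z ∧ ¬y ≤ z ∧ ¬z ≤ y)
    (b : I → Set T)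
    (hdisj : ∀ i j : I, i ≠ j → Disjoint (b i) (b j))
    (hchain : ∀ i : I, IsChain (· ≤ ·) {x : T | ∃ y ∈ b i, x ≤ y})
    (h : T → ℕ)
    (hh : ∀ ρ ν : T, ρ < ν → h ρ = h ν → ∃ i, ρ ∈ b i ∧ ν ∈ b i) :
    (∀ n : ℕ,
      (∀ ρ ∈ {ρ : T | ∀ ν, ρ ≤ ν → h ν ≠ n}, ∀ ν, ρ ≤ ν →
        ν ∈ {ρ : T | ∀ ν, ρ ≤ ν → h ν ≠ n}) ∧
      (∀ t : T, ∃ ρ, t ≤ ρ ∧ ρ ∈ {ρ : T | ∀ ν, ρ ≤ ν → h ν ≠ n})) ∧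
    (⋂ n : ℕ, {ρ : T | ∀ ν, ρ ≤ ν → h ν ≠ n}) = ∅ := by
  constructor
  · intro n
    constructor
    · intro ρ hρ ν hν μ hμ
      exact hρ μ (hν.trans hμ)
    · intro t
      by_contra hcon
      push_neg at hcon
      -- every ρ ≥ t has some ν ≥ ρ with h ν = n
      have H : ∀ ρ : T, t ≤ ρ → ∃ ν, ρ ≤ ν ∧ h ν = n := by
        intro ρ hρ
        have := hcon ρ hρ
        simp only [Set.mem_setOf_eq] at this
        push_neg at this
        exact this
      obtain ⟨ν₁, hν₁, hn₁⟩ := H t le_rfl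
      obtain ⟨y, z, hy, hz, hyz, hzy⟩ := hsplit ν₁
      have hy' : ν₁ < y := lt_of_le_of_ne hy (by rintro rfl; exact hyz hz)
      have hz' : ν₁ < z := lt_of_le_of_ne hz (by rintro rfl; exact hzy hy)
      obtain ⟨ν₂, hν₂, hn₂⟩ := H y (hν₁.trans hy)
      obtain ⟨ν₃, hν₃, hn₃⟩ := H z (hν₁.trans hz)
      obtain ⟨i, hi1, hi2⟩ := hh ν₁ ν₂ (hy'.trans_le hν₂) (hn₁.trans hn₂.symm)
      obtain ⟨j, hj1, hj2⟩ := hh ν₁ ν₃ (hz'.trans_le hν₃) (hn₁.trans hn₃.symm)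
      have hij : i = j := by
        by_contra hne
        exact (hdisj i j hne).le_bot ⟨hi1, hj1⟩
      subst hij
      have hyD : y ∈ {x : T | ∃ w ∈ b i, x ≤ w} := ⟨ν₂, hi2, hν₂⟩
      have hzD : z ∈ {x : T | ∃ w ∈ b i, x ≤ w} := ⟨ν₃, hj2, hν₃⟩
      rcases eq_or_ne y z with rfl | hne
      · exact hyz le_rfl
      · rcases hchain i hyD hzD hne with hle | hle
        · exact hyz hle
        · exact hzy hle
  · ext ρ
    simp only [Set.mem_iInter, Set.mem_empty_iff_false, iff_false]
    intro hall
    exact hall (h ρ) ρ le_rfl rfl
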